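/- Let p(z) be the Hilbert polynomial written in Macaulay's form p(z) = Σ_{i=0}^{s} [ C(z+i, i+1) - C(z+i-m_i, i+1) ] with integers m_0 ≥ m_1 ≥ ... ≥ m_s ≥ 1. Then this representation with m_s ≠ 0 is unique: the integers m_0,...,m_s are uniquely determined by p. -/
import Mathlib


/-- The binomial coefficient `C(z, k) = z(z-1)⋯(z-k+1)/k!` as a function of a
rational argument `z`. -/
noncomputable def qchoose (z : ℚ) (k : ℕ) : ℚ :=
  (descPochhammer ℚ k).eval z / (k.factorial : ℚ)

/-- Macaulay's expression `g(m_0, …, m_s; z) = ∑_{i=0}^{s} [C(z+i, i+1) - C(z+i-m_i, i+1)]`. -/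
noncomputable def macaulayFun (s : ℕ) (mv : ℕ → ℕ) (z : ℚ) : ℚ :=
  ∑ i ∈ Finset.range (s + 1),
    (qchoose (z + i) (i + 1) - qchoose (z + i - mv i) (i + 1))

lemma qchoose_zero (z : ℚ) : qchoose z 0 = 1 := by simp [qchoose]

lemma qchoose_one (z : ℚ) : qchoose z 1 = z := by simp [qchoose]

/-- Pascal-type identity: `C(z+1, k+1) - C(z, k+1) = C(z, k)`. -/
lemma qchoose_delta (z : ℚ) (k : ℕ) :
    qchoose (z + 1) (k + 1) - qchoose z (k + 1) = qchoose z k := by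
  have h1 : (descPochhammer ℚ (k+1)).eval (z+1) = (z+1) * (descPochhammer ℚ k).eval z := by
    rw [descPochhammer_succ_left]
    simp [Polynomial.eval_comp]
  have h2 := descPochhammer_succ_eval (S := ℚ) k z
  have hfac : ((k+1).factorial : ℚ) = (k+1) * k.factorial := by
    rw [Nat.factorial_succ]; push_cast; ring
  have hk : (k.factorial : ℚ) ≠ 0 := Nat.cast_ne_zero.mpr k.factorial_ne_zero
  have hk1 : ((k:ℚ)+1) ≠ 0 := by positivity
  unfold qchoose
  rw [h1, h2, hfac]
  field_simp
  ring

/-- The `t`-th finite difference of `macaulayFun` (with truncated subtraction in the index). -/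
noncomputable def auxFun (t s : ℕ) (mv : ℕ → ℕ) (z : ℚ) : ℚ :=
  ∑ i ∈ Finset.range (s + 1),
    (qchoose (z + i) (i + 1 - t) - qchoose (z + i - mv i) (i + 1 - t))

lemma auxFun_zero (s : ℕ) (mv : ℕ → ℕ) (z : ℚ) : auxFun 0 s mv z = macaulayFun s mv z := rfl

lemma auxFun_delta (t s : ℕ) (mv : ℕ → ℕ) (z : ℚ) :
    auxFun t s mv (z + 1) - auxFun t s mv z = auxFun (t + 1) s mv z := by
  unfold auxFun
  rw [← Finset.sum_sub_distrib]
  refine Finset.sum_congr rfl fun i _ => ?_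
  rcases Nat.lt_or_ge i t with h | h
  · have h0 : i + 1 - t = 0 := by omega
    have h1 : i + 1 - (t + 1) = 0 := by omega
    simp [h0, h1, qchoose_zero]
  · have h0 : i + 1 - t = (i - t) + 1 := by omega
    have h1 : i + 1 - (t + 1) = i - t := by omega
    rw [h0, h1]
    have e1 : (z + 1 + i : ℚ) = (z + i) + 1 := by ring
    rw [e1]
    have e2 : (z + i + 1 - mv i : ℚ) = (z + i - mv i) + 1 := by ring
    rw [e2]
    have d1 := qchoose_delta (z + i) (i - t)
    have d2 := qchoose_delta (z + i - mv i) (i - t)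
    linarith

lemma auxFun_high (t s : ℕ) (mv : ℕ → ℕ) (z : ℚ) (h : s + 1 ≤ t) : auxFun t s mv z = 0 := by
  unfold auxFun
  refine Finset.sum_eq_zero fun i hi => ?_
  have : i + 1 - t = 0 := by
    have := Finset.mem_range.mp hi; omega
  simp [this, qchoose_zero]

lemma auxFun_self (s : ℕ) (mv : ℕ → ℕ) (z : ℚ) : auxFun s s mv z = mv s := by
  unfold auxFun
  rw [Finset.sum_range_succ]
  have h0 : ∑ i ∈ Finset.range s,
      (qchoose (z + i) (i + 1 - s) - qchoose (z + i - mv i) (i + 1 - s)) = 0 := by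
    refine Finset.sum_eq_zero fun i hi => ?_
    have : i + 1 - s = 0 := by have := Finset.mem_range.mp hi; omega
    simp [this, qchoose_zero]
  have h1 : s + 1 - s = 1 := by omega
  rw [h0, h1, qchoose_one, qchoose_one]
  ring

lemma auxFun_eq (s s' : ℕ) (mv mv' : ℕ → ℕ)
    (heq : ∀ z : ℚ, macaulayFun s mv z = macaulayFun s' mv' z) :
    ∀ t, ∀ z : ℚ, auxFun t s mv z = auxFun t s' mv' z := by
  intro t
  induction t with
  | zero => intro z; rw [auxFun_zero, auxFun_zero]; exact heq z
  | succ t ih =>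
      intro z
      rw [← auxFun_delta, ← auxFun_delta, ih, ih]

lemma not_lt_aux (s s' : ℕ) (mv mv' : ℕ → ℕ) (hlast' : 1 ≤ mv' s')
    (heq : ∀ z : ℚ, macaulayFun s mv z = macaulayFun s' mv' z) : ¬ s < s' := by
  intro hlt
  have h := auxFun_eq s s' mv mv' heq s' 0
  rw [auxFun_high s' s mv 0 (by omega), auxFun_self] at h
  have : (mv' s' : ℚ) ≥ 1 := by exact_mod_cast hlast'
  linarith

lemma mv_eq : ∀ (s : ℕ) (mv mv' : ℕ → ℕ),
    (∀ z : ℚ, macaulayFun s mv z = macaulayFun s mv' z) → ∀ i ≤ s, mv i = mv' i := by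
  intro s
  induction s with
  | zero =>
      intro mv mv' heq i hi
      interval_cases i
      have h := auxFun_eq 0 0 mv mv' heq 0 0
      rw [auxFun_self, auxFun_self] at h
      exact_mod_cast h
  | succ s ih =>
      intro mv mv' heq i hi
      have htop : mv (s+1) = mv' (s+1) := by
        have h := auxFun_eq (s+1) (s+1) mv mv' heq (s+1) 0
        rw [auxFun_self, auxFun_self] at h
        exact_mod_cast h
      rcases Nat.lt_or_ge i (s+1) with h | h
      · refine ih mv mv' ?_ i (by omega)
        intro z
        have expand : ∀ f : ℕ → ℕ, macaulayFun (s+1) f z = macaulayFun s f z +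
            (qchoose (z + (s+1 : ℕ)) ((s+1) + 1) - qchoose (z + (s+1 : ℕ) - f (s+1)) ((s+1) + 1)) := by
          intro f
          exact Finset.sum_range_succ _ (s+1)
        have h1 := heq z
        rw [expand mv, expand mv', htop] at h1
        linarith
      · have : i = s + 1 := by omega
        rw [this]; exact htop

/-- Uniqueness of the Macaulay representation: if
`p(z) = ∑_{i=0}^{s} [C(z+i,i+1) - C(z+i-m_i,i+1)]` with
`m_0 ≥ m_1 ≥ … ≥ m_s ≥ 1`, then `s` and the `m_i` are uniquely determined by `p`. -/
theorem stmt13 (s s' : ℕ) (mv mv' : ℕ → ℕ)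
    (hmono : ∀ i j : ℕ, i ≤ j → j ≤ s → mv j ≤ mv i) (hlast : 1 ≤ mv s)
    (hmono' : ∀ i j : ℕ, i ≤ j → j ≤ s' → mv' j ≤ mv' i) (hlast' : 1 ≤ mv' s')
    (heq : ∀ z : ℚ, macaulayFun s mv z = macaulayFun s' mv' z) :
    s = s' ∧ ∀ i ≤ s, mv i = mv' i := by
  have hss : s = s' := by
    have h1 := not_lt_aux s s' mv mv' hlast' heq
    have h2 := not_lt_aux s' s mv' mv hlast (fun z => (heq z).symm)
    omega
  subst hss
  exact ⟨rfl, mv_eq s mv mv' heq⟩
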